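/- Let p be an odd prime, e ≥ 1, n = p^e, 1 ≤ f ≤ e, and q = 1 + p^f. In G_f = ⟨g, h | g^n = h^n = 1, g⁻¹hg = h^q⟩, every element has order dividing n; that is, G_f has exponent n (equivalently, (g^i h^j)^n = 1 for all integers i, j). -/

import Mathlib

/-- The relations for the group `G_f = ⟨g, h | g^n = h^n = 1, g⁻¹hg = h^q⟩`. -/
def fermatRels (n q : ℕ) : Set (FreeGroup (Fin 2)) :=
  {FreeGroup.of 0 ^ n, FreeGroup.of 1 ^ n,
   (FreeGroup.of 0)⁻¹ * FreeGroup.of 1 * FreeGroup.of 0 * (FreeGroup.of 1 ^ q)⁻¹}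

/-- The group `G_f` (with `n = p^e`, `q = 1 + p^f`). -/
abbrev Gf (n q : ℕ) := PresentedGroup (fermatRels n q)

/-- The generator `g` of `G_f`. -/
def gGen (n q : ℕ) : Gf n q := PresentedGroup.of 0

/-- The generator `h` of `G_f`. -/
def hGen (n q : ℕ) : Gf n q := PresentedGroup.of 1

section GenericGroup

variable {Γ : Type*} [Group Γ]

lemma myconj_pow (a b : Γ) (m : ℕ) : (a⁻¹ * b * a) ^ m = a⁻¹ * b ^ m * a := by
  induction m with
  | zero => group
  | succ m ih => rw [pow_succ, ih, pow_succ]; group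

lemma myswap1 {a b : Γ} {q : ℕ} (hc : a⁻¹ * b * a = b ^ q) (m : ℕ) :
    b ^ m * a = a * b ^ (q * m) := by
  have h2 : a⁻¹ * b ^ m * a = b ^ (q * m) := by
    rw [← myconj_pow, hc, ← pow_mul]
  calc b ^ m * a = a * (a⁻¹ * b ^ m * a) := by group
  _ = a * b ^ (q * m) := by rw [h2]

lemma myswap2 {a b : Γ} {q : ℕ} (hc : a⁻¹ * b * a = b ^ q) :
    ∀ k m : ℕ, b ^ m * a ^ k = a ^ k * b ^ (q ^ k * m) := by
  intro k
  induction k with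
  | zero => simp
  | succ k ih =>
    intro m
    have e1 : q * (q ^ k * m) = q ^ (k + 1) * m := by ring
    rw [pow_succ, ← mul_assoc, ih m, mul_assoc, myswap1 hc, e1, ← mul_assoc, ← pow_succ]

lemma myprod {a b : Γ} {q : ℕ} (hc : a⁻¹ * b * a = b ^ q) (i j k l : ℕ) :
    (a ^ i * b ^ j) * (a ^ k * b ^ l) = a ^ (i + k) * b ^ (q ^ k * j + l) := by
  calc (a ^ i * b ^ j) * (a ^ k * b ^ l) = a ^ i * (b ^ j * a ^ k) * b ^ l := by group
  _ = a ^ i * (a ^ k * b ^ (q ^ k * j)) * b ^ l := by rw [myswap2 hc]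
  _ = a ^ (i + k) * b ^ (q ^ k * j + l) := by rw [pow_add, pow_add]; group

lemma mypow {a b : Γ} {q : ℕ} (hc : a⁻¹ * b * a = b ^ q) (i j : ℕ) :
    ∀ m : ℕ, (a ^ i * b ^ j) ^ m
      = a ^ (i * m) * b ^ (j * ∑ k ∈ Finset.range m, (q ^ i) ^ k) := by
  intro m
  induction m with
  | zero => simp
  | succ m ih =>
    have e1 : i * (m + 1) = i * m + i := by ring
    have e2 : j * (q ^ i * (∑ k ∈ Finset.range m, (q ^ i) ^ k) + 1)
        = q ^ i * (j * ∑ k ∈ Finset.range m, (q ^ i) ^ k) + j := by ring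
    rw [pow_succ, ih, myprod hc, geom_sum_succ, e1, e2]

lemma mykill {a : Γ} {n m : ℕ} (h : a ^ n = 1) (hd : n ∣ m) : a ^ m = 1 := by
  obtain ⟨t, rfl⟩ := hd
  rw [pow_mul, h, one_pow]

end GenericGroup

lemma geom_split (r : ℤ) (a b : ℕ) :
    ∑ k ∈ Finset.range (a * b), r ^ k
      = (∑ k ∈ Finset.range a, r ^ k) * ∑ j ∈ Finset.range b, (r ^ a) ^ j := by
  induction b with
  | zero => simp
  | succ b ih =>
    rw [Nat.mul_succ, Finset.sum_range_add, ih, Finset.sum_range_succ, mul_add]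
    congr 1
    have h1 : ∀ x : ℕ, r ^ (a * b + x) = (r ^ a) ^ b * r ^ x := fun x => by
      rw [pow_add, pow_mul]
    rw [Finset.sum_congr rfl fun x _ => h1 x, ← Finset.mul_sum, mul_comm]

lemma geomZ (p : ℕ) (r : ℤ) (hr : (p : ℤ) ∣ r - 1) :
    ∀ e : ℕ, (p : ℤ) ^ e ∣ ∑ k ∈ Finset.range (p ^ e), r ^ k := by
  have hs : ∀ t : ℕ, (p : ℤ) ∣ r ^ t - 1 := fun t =>
    hr.trans (by simpa using sub_dvd_pow_sub_pow r 1 t)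
  intro e
  induction e with
  | zero => simp
  | succ e ih =>
    rw [pow_succ, show p ^ (e + 1) = p ^ e * p from pow_succ p e, geom_split r (p ^ e) p]
    refine mul_dvd_mul ih ?_
    have key : ∑ j ∈ Finset.range p, ((r ^ p ^ e) ^ j)
        = (∑ j ∈ Finset.range p, ((r ^ p ^ e) ^ j - 1)) + p := by
      rw [Finset.sum_sub_distrib]
      simp
    rw [key]
    exact dvd_add (Finset.dvd_sum fun j _ => by rw [← pow_mul]; exact hs _) (dvd_refl _)

theorem stmt4 (p e f : ℕ) (hp : p.Prime) (hodd : Odd p) (he : 1 ≤ e)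
    (hf1 : 1 ≤ f) (hfe : f ≤ e) (n : ℕ) (hn : n = p ^ e) (q : ℕ) (hq : q = 1 + p ^ f) :
    (∀ x : Gf n q, x ^ n = 1) ∧
    Monoid.exponent (Gf n q) = n ∧
    (∀ i j : ℤ, (gGen n q ^ i * hGen n q ^ j) ^ n = 1) := by
  have hn1 : 1 ≤ n := by rw [hn]; exact Nat.one_le_pow _ _ hp.pos
  set G := gGen n q with hG
  set H := hGen n q with hH
  -- the relations hold in `Gf n q`
  have relone : ∀ r ∈ fermatRels n q, PresentedGroup.mk (fermatRels n q) r = 1 := fun r h =>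
    (QuotientGroup.eq_one_iff r).2 (Subgroup.subset_normalClosure h)
  have relG : G ^ n = 1 := by
    have := relone (FreeGroup.of 0 ^ n) (Set.mem_insert _ _)
    rwa [map_pow] at this
  have relH : H ^ n = 1 := by
    have := relone (FreeGroup.of 1 ^ n)
      (Set.mem_insert_iff.2 (Or.inr (Set.mem_insert _ _)))
    rwa [map_pow] at this
  have relC : G⁻¹ * H * G = H ^ q := by
    have := relone ((FreeGroup.of 0)⁻¹ * FreeGroup.of 1 * FreeGroup.of 0 *
        (FreeGroup.of 1 ^ q)⁻¹)
      (Set.mem_insert_iff.2 (Or.inr (Set.mem_insert_iff.2 (Or.inr rfl))))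
    simp only [map_mul, map_inv, map_pow] at this
    have h2 := mul_eq_one_iff_eq_inv.1 this
    rw [inv_inv] at h2
    exact h2
  -- p divides q^i - 1 over ℤ
  have hpq : ∀ i : ℕ, (p : ℤ) ∣ (q : ℤ) ^ i - 1 := by
    intro i
    have h1 : (p : ℤ) ∣ (q : ℤ) - 1 := by
      have : ((q : ℤ)) - 1 = (p : ℤ) ^ f := by rw [hq]; push_cast; ring
      rw [this]
      exact dvd_pow_self _ (by omega)
    exact h1.trans (by simpa using sub_dvd_pow_sub_pow (q : ℤ) 1 i)
  -- the key divisibility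
  have hcast : (n : ℤ) = (p : ℤ) ^ e := by rw [hn]; push_cast; ring
  have hdvdS : ∀ i : ℕ, n ∣ ∑ k ∈ Finset.range n, (q ^ i) ^ k := by
    intro i
    have h2 : ((n : ℤ)) ∣ ∑ k ∈ Finset.range n, ((q : ℤ) ^ i) ^ k := by
      rw [hcast, hn]
      exact geomZ p ((q : ℤ) ^ i) (hpq i) e
    have h3 : ((n : ℤ)) ∣ ((∑ k ∈ Finset.range n, (q ^ i) ^ k : ℕ) : ℤ) := by
      push_cast
      exact h2
    exact_mod_cast h3
  -- every element has the form G^i * H^j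
  have genform : ∀ x : Gf n q, ∃ i j : ℕ, x = G ^ i * H ^ j := by
    obtain ⟨m, hm⟩ : ∃ m, n = m + 1 := ⟨n - 1, by omega⟩
    set S : Subgroup (Gf n q) :=
      { carrier := {x | ∃ i j : ℕ, x = G ^ i * H ^ j}
        one_mem' := ⟨0, 0, by simp⟩
        mul_mem' := by
          rintro x y ⟨i, j, rfl⟩ ⟨k, l, rfl⟩
          exact ⟨i + k, q ^ k * j + l, (myprod relC i j k l)⟩
        inv_mem' := by
          rintro x ⟨i, j, rfl⟩
          refine ⟨i * m, q ^ (i * m) * j * m, ?_⟩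
          have hmul : (G ^ i * H ^ j) * (G ^ (i * m) * H ^ (q ^ (i * m) * j * m)) = 1 := by
            rw [myprod relC]
            have e1 : i + i * m = i * n := by rw [hm]; ring
            have e2 : q ^ (i * m) * j + q ^ (i * m) * j * m = (q ^ (i * m) * j) * n := by
              rw [hm]; ring
            rw [e1, e2, mykill relG ⟨i, by ring⟩, mykill relH ⟨q ^ (i * m) * j, by ring⟩,
              one_mul]
          exact (inv_eq_of_mul_eq_one_right hmul).symm ▸ rfl } with hS
    intro x
    have : x ∈ S := by
      refine PresentedGroup.generated_by _ S (fun j => ?_) x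
      fin_cases j
      · exact ⟨1, 0, by simp [hG, gGen]⟩
      · exact ⟨0, 1, by simp [hH, hGen]⟩
    exact this
  -- main statement
  have main : ∀ x : Gf n q, x ^ n = 1 := by
    intro x
    obtain ⟨i, j, rfl⟩ := genform x
    rw [mypow relC, mykill relG ⟨i, by ring⟩, one_mul]
    exact mykill relH ((hdvdS i).mul_left j)
  refine ⟨main, ?_, fun i j => main _⟩
  -- exponent computation
  have hE1 : Monoid.exponent (Gf n q) ∣ n :=
    Monoid.exponent_dvd_of_forall_pow_eq_one main
  -- build a homomorphism to Perm (ZMod n)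
  have hco : Nat.Coprime q n := by
    rw [hq, hn]
    refine Nat.Coprime.pow_right _ ((Nat.Prime.coprime_iff_not_dvd hp).2 ?_).symm
    intro hdvd
    have hpf : p ∣ p ^ f := dvd_pow_self _ (by omega)
    have : p ∣ 1 := (Nat.dvd_add_right hpf).1 (by rwa [Nat.add_comm] at hdvd)
    exact hp.one_lt.ne' (Nat.dvd_one.1 this)
  set u : (ZMod n)ˣ := ZMod.unitOfCoprime q hco with hu
  have hun : u ^ n = 1 := by
    have hd : ((n : ℤ)) ∣ (q : ℤ) ^ n - 1 := by
      rw [← geom_sum_mul]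
      refine Dvd.dvd.mul_right ?_ _
      rw [hcast, hn]
      exact geomZ p (q : ℤ) (by simpa using hpq 1) e
    have h0 : (((q : ℤ) ^ n - 1 : ℤ) : ZMod n) = 0 :=
      (ZMod.intCast_zmod_eq_zero_iff_dvd _ _).2 hd
    push_cast at h0
    ext
    rw [hu, Units.val_pow_eq_pow_val, Units.val_one, ZMod.coe_unitOfCoprime]
    linear_combination h0
  set P : Equiv.Perm (ZMod n) := MulAction.toPermHom (ZMod n)ˣ (ZMod n) u⁻¹ with hP
  set T : Equiv.Perm (ZMod n) := Equiv.addRight (1 : ZMod n) with hT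
  have hTpow : ∀ m : ℕ, T ^ m = Equiv.addRight ((m : ZMod n)) := by
    intro m
    rw [hT, Equiv.nsmul_addRight]
    congr 1
    simp
  have hrels : ∀ r ∈ fermatRels n q, FreeGroup.lift (![P, T] : Fin 2 → Equiv.Perm (ZMod n)) r = 1 := by
    intro r hr
    simp only [fermatRels, Set.mem_insert_iff, Set.mem_singleton_iff] at hr
    rcases hr with rfl | rfl | rfl
    · rw [map_pow, FreeGroup.lift_apply_of]
      show P ^ n = 1
      rw [hP, ← map_pow, inv_pow, hun, inv_one, map_one]
    · rw [map_pow, FreeGroup.lift_apply_of]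
      show T ^ n = 1
      rw [hTpow, ZMod.natCast_self, Equiv.addRight_zero]
    · simp only [map_mul, map_inv, map_pow, FreeGroup.lift_apply_of]
      show P⁻¹ * T * P * (T ^ q)⁻¹ = 1
      rw [hTpow q, mul_inv_eq_one]
      ext x
      simp only [hP, hT, Equiv.Perm.mul_apply, Equiv.Perm.inv_def]
      have h1 : ((MulAction.toPermHom (ZMod n)ˣ (ZMod n)) u⁻¹) x = u⁻¹ • x := rfl
      have h2 : ∀ y : ZMod n,
          (Equiv.symm ((MulAction.toPermHom (ZMod n)ˣ (ZMod n)) u⁻¹)) y = u • y := by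
        intro y
        show (u⁻¹)⁻¹ • y = u • y
        rw [inv_inv]
      rw [h1, Equiv.coe_addRight, h2, smul_add, smul_inv_smul, Equiv.coe_addRight]
      congr 1
      simp [Units.smul_def, smul_eq_mul, hu, ZMod.coe_unitOfCoprime]
  set π : Gf n q →* Equiv.Perm (ZMod n) := PresentedGroup.toGroup hrels with hπ
  have hE2 : n ∣ Monoid.exponent (Gf n q) := by
    have h1 : H ^ Monoid.exponent (Gf n q) = 1 := Monoid.pow_exponent_eq_one H
    have h2 : T ^ Monoid.exponent (Gf n q) = 1 := by
      have := congrArg π h1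
      rw [map_pow, map_one] at this
      have hπH : π H = T := by
        rw [hH, hπ]
        show PresentedGroup.toGroup hrels (PresentedGroup.of 1) = T
        rw [PresentedGroup.toGroup.of]
        simp
      rwa [hπH] at this
    rw [hTpow] at h2
    have h3 : ((Monoid.exponent (Gf n q) : ZMod n)) = 0 := by
      have := congrArg (fun σ : Equiv.Perm (ZMod n) => σ 0) h2
      simpa using this
    exact (ZMod.natCast_eq_zero_iff _ _).1 h3
  exact Nat.dvd_antisymm hE1 hE2
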